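/- Adjoint-based gradient formula: with Ĵ(u) = ½ ‖G u − y_d‖² + (λ/2) ‖u‖² where G u = B⁻¹(F u + C) for a Hilbert-space isomorphism B, the Fréchet derivative of Ĵ at u is Ĵ′(u) = λ u + F* p, where p solves the adjoint equation B* p = ι(G u − y_d) (ι the canonical embedding of the observation), i.e., for all v ∈ U, Ĵ′(u)(v) = λ ⟨u, v⟩ + ⟨F* p, v⟩. -/

import Mathlib

open RealInnerProductSpace

theorem adjoint_gradient_formula {U Y Z : Type*}
    [NormedAddCommGroup U] [InnerProductSpace ℝ U] [CompleteSpace U]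
    [NormedAddCommGroup Y] [InnerProductSpace ℝ Y] [CompleteSpace Y]
    [NormedAddCommGroup Z] [InnerProductSpace ℝ Z] [CompleteSpace Z]
    (B : Y ≃L[ℝ] Z) (F : U →L[ℝ] Z) (C : Z) (y_d : Y) (lam : ℝ) (hlam : 0 < lam)
    (G : U → Y) (hG : ∀ u, G u = B.symm (F u + C))
    (J : U → ℝ) (hJ : ∀ u, J u = (1 / 2) * ‖G u - y_d‖ ^ 2 + (lam / 2) * ‖u‖ ^ 2)
    (u : U) (p : Z)
    (hp : ContinuousLinearMap.adjoint (B : Y →L[ℝ] Z) p = G u - y_d) :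
    ∃ D : U →L[ℝ] ℝ, HasFDerivAt J D u ∧
      ∀ v : U, D v = lam * ⟪u, v⟫ + ⟪ContinuousLinearMap.adjoint F p, v⟫ := by
  set L : U →L[ℝ] Y := (B.symm : Z →L[ℝ] Y).comp F with hL
  set c : Y := B.symm C - y_d with hc
  have hφ : ∀ w, G w - y_d = L w + c := by
    intro w
    rw [hG]
    simp [hL, hc, map_add]
    abel
  have hJeq : J = fun w => (1/2 : ℝ) * ⟪L w + c, L w + c⟫ + (lam/2) * ⟪w, w⟫ := by
    funext w
    rw [hJ, ← hφ, real_inner_self_eq_norm_sq, real_inner_self_eq_norm_sq]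
  have hA : HasFDerivAt (fun w : U => L w + c) L u := (L.hasFDerivAt).add_const _
  have h1 := (hA.inner ℝ hA).const_mul (1/2 : ℝ)
  have h2 := ((hasFDerivAt_id u).inner ℝ (hasFDerivAt_id u)).const_mul (lam/2)
  have h := h1.add h2
  refine ⟨_, hJeq ▸ (show HasFDerivAt (fun w => (1/2 : ℝ) * ⟪L w + c, L w + c⟫ + (lam/2) * ⟪w, w⟫) _ u from h), ?_⟩
  intro v
  have key : ⟪L u + c, L v⟫ = ⟪ContinuousLinearMap.adjoint F p, v⟫ := by
    rw [← hφ, ← hp, ContinuousLinearMap.adjoint_inner_left,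
      ContinuousLinearMap.adjoint_inner_left]
    simp [hL]
  simp [fderivInnerCLM_apply, real_inner_comm (L u + c) (L v), key,
    real_inner_comm v u]
  ring
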